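/- Let X_1, ..., X_n be independent random variables taking values in a finite set X, with joint (product) distribution P_{X^n} on X^n. Equip X^n with the Hamming metric d_n(x^n, y^n) = Σ_{i=1}^n 1{x_i ≠ y_i}, and for A ⊆ X^n and r > 0 let A_r = {x^n ∈ X^n : d_n(x^n, A) < r} denote the r-blowup of A, where d_n(x^n, A) = min_{y^n ∈ A} d_n(x^n, y^n). Then for any A ⊆ X^n with P_{X^n}(A) > 0 and any r > sqrt((n/2) ln(1/P_{X^n}(A))), P_{X^n}(A_r) ≥ 1 − exp(−(2/n)·(r − sqrt((n/2) ln(1/P_{X^n}(A))))²). (Nonasymptotic blowing-up lemma.) -/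

import Mathlib

open MeasureTheory ProbabilityTheory
open scoped ENNReal NNReal

private lemma bul_key_ineq (t : ℝ) (ht0 : 0 ≤ t) (ht1 : t ≤ 1) (l : ℝ) :
    1 - t + t * Real.exp l ≤ Real.exp (t * l + l ^ 2 / 8) := by
  set D : ℝ → ℝ := fun x => 1 - t + t * Real.exp x with hD
  have hDpos : ∀ x, 0 < D x := by
    intro x
    rcases eq_or_lt_of_le ht0 with h | h
    · simp [hD, ← h]
    · have := Real.exp_pos x
      have : 0 < t * Real.exp x := by positivity
      simp only [hD]; linarith
  set u : ℝ → ℝ := fun x => t * Real.exp x / D x with hu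
  have hu0 : u 0 = t := by simp [hu, hD]
  have hurange : ∀ x, 0 ≤ u x ∧ u x ≤ 1 := by
    intro x
    have h1 : 0 ≤ t * Real.exp x := by positivity
    have h2 := hDpos x
    constructor
    · exact div_nonneg h1 h2.le
    · rw [div_le_one h2]; simp only [hD]; linarith
  have hDderiv : ∀ x, HasDerivAt D (t * Real.exp x) x := by
    intro x
    exact ((Real.hasDerivAt_exp x).const_mul t).const_add (1 - t)
  have huderiv : ∀ x, HasDerivAt u (u x * (1 - u x)) x := by
    intro x
    have h := ((Real.hasDerivAt_exp x).const_mul t).div (hDderiv x) (hDpos x).ne'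
    refine h.congr_deriv ?_
    have hne := (hDpos x).ne'
    simp only [hu]
    field_simp
  set G : ℝ → ℝ := fun x => t + x / 4 - u x with hG
  have hGderiv : ∀ x, HasDerivAt G (1 / 4 - u x * (1 - u x)) x := by
    intro x
    exact ((hasDerivAt_id x).div_const 4).const_add t |>.sub (huderiv x)
  have hGmono : Monotone G := by
    apply monotone_of_deriv_nonneg
    · exact fun x => (hGderiv x).differentiableAt
    · intro x
      rw [(hGderiv x).deriv]
      obtain ⟨h1, h2⟩ := hurange x
      nlinarith [sq_nonneg (u x - 1/2)]
  have hG0 : G 0 = 0 := by simp [hG, hu0]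
  set F : ℝ → ℝ := fun x => t * x + x ^ 2 / 8 - Real.log (D x) with hF
  have hFderiv : ∀ x, HasDerivAt F (G x) x := by
    intro x
    have hlog : HasDerivAt (fun y => Real.log (D y)) (t * Real.exp x / D x) x :=
      (hDderiv x).log (hDpos x).ne'
    have h1 := ((hasDerivAt_id x).const_mul t).add (((hasDerivAt_id x).pow 2).div_const 8)
    have h2 := h1.sub hlog
    refine h2.congr_deriv ?_
    simp only [hG, hu, id_eq]
    ring
  have hF0 : F 0 = 0 := by simp [hF, hD]
  have hFnonneg : 0 ≤ F l := by
    rcases le_or_gt 0 l with h | h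
    · have hmono : MonotoneOn F (Set.Ici 0) := by
        apply monotoneOn_of_deriv_nonneg (convex_Ici 0)
        · exact Continuous.continuousOn (by
            fun_prop (disch := intro x; exact (hDpos x).ne'))
        · exact fun x _ => (hFderiv x).differentiableAt.differentiableWithinAt
        · intro x hx
          rw [(hFderiv x).deriv]
          have : (0:ℝ) ≤ x := le_of_lt (by rwa [interior_Ici, Set.mem_Ioi] at hx)
          calc (0:ℝ) = G 0 := hG0.symm
            _ ≤ G x := hGmono this
      have := hmono (Set.self_mem_Ici) h h
      rwa [hF0] at this
    · have hanti : AntitoneOn F (Set.Iic 0) := by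
        apply antitoneOn_of_deriv_nonpos (convex_Iic 0)
        · exact Continuous.continuousOn (by
            fun_prop (disch := intro x; exact (hDpos x).ne'))
        · exact fun x _ => (hFderiv x).differentiableAt.differentiableWithinAt
        · intro x hx
          rw [(hFderiv x).deriv]
          have : x ≤ (0:ℝ) := le_of_lt (by rwa [interior_Iic, Set.mem_Iio] at hx)
          calc G x ≤ G 0 := hGmono this
            _ = 0 := hG0
      have := hanti (Set.mem_Iic.mpr h.le) (Set.self_mem_Iic) h.le
      rwa [hF0] at this
  have hlog : Real.log (D l) ≤ t * l + l ^ 2 / 8 := by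
    simp only [hF] at hFnonneg; linarith
  calc D l = Real.exp (Real.log (D l)) := (Real.exp_log (hDpos l)).symm
    _ ≤ _ := Real.exp_le_exp.mpr hlog

private lemma bul_hoeffding_sum {α : Type*} [Fintype α] (q : α → ℝ) (hq0 : ∀ a, 0 ≤ q a)
    (hq1 : ∑ a, q a = 1) (g : α → ℝ) (hg : ∀ a b, g a - g b ≤ 1) (l : ℝ) :
    ∑ a, q a * Real.exp (l * g a) ≤ Real.exp (l * (∑ a, q a * g a) + l ^ 2 / 8) := by
  rcases isEmpty_or_nonempty α with h | h
  · rw [Finset.univ_eq_empty, Finset.sum_empty] at hq1; norm_num at hq1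
  have hU : (Finset.univ : Finset α).Nonempty := Finset.univ_nonempty
  set c := Finset.univ.inf' hU g with hc
  have hcle : ∀ a, c ≤ g a := fun a => Finset.inf'_le _ (Finset.mem_univ a)
  have hgle : ∀ a, g a ≤ c + 1 := by
    intro a
    obtain ⟨b, _, hb⟩ := Finset.exists_mem_eq_inf' hU g
    rw [← hc] at hb
    have := hg a b
    rw [hb]; linarith
  set m := ∑ a, q a * g a with hm
  set t := m - c with ht
  have hmlb : c ≤ m := by
    calc c = ∑ a, q a * c := by rw [← Finset.sum_mul, hq1, one_mul]
      _ ≤ m := Finset.sum_le_sum fun a _ => mul_le_mul_of_nonneg_left (hcle a) (hq0 a)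
  have hmub : m ≤ c + 1 := by
    calc m ≤ ∑ a, q a * (c + 1) :=
          Finset.sum_le_sum fun a _ => mul_le_mul_of_nonneg_left (hgle a) (hq0 a)
      _ = c + 1 := by rw [← Finset.sum_mul, hq1, one_mul]
  set E0 := Real.exp (l * c) with hE0
  set E1 := Real.exp (l * (c + 1)) with hE1
  have hpt : ∀ a, Real.exp (l * g a) ≤ (c + 1 - g a) * E0 + (g a - c) * E1 := by
    intro a
    have h1 : (0:ℝ) ≤ c + 1 - g a := by linarith [hgle a]
    have h2 : (0:ℝ) ≤ g a - c := by linarith [hcle a]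
    have h3 : (c + 1 - g a) + (g a - c) = 1 := by ring
    have := convexOn_exp.2 (Set.mem_univ (l * c)) (Set.mem_univ (l * (c + 1))) h1 h2 h3
    simpa [smul_eq_mul, show (c + 1 - g a) * (l * c) + (g a - c) * (l * (c + 1)) = l * g a by ring]
      using this
  calc ∑ a, q a * Real.exp (l * g a)
      ≤ ∑ a, q a * ((c + 1 - g a) * E0 + (g a - c) * E1) :=
        Finset.sum_le_sum fun a _ => mul_le_mul_of_nonneg_left (hpt a) (hq0 a)
    _ = (1 - t) * E0 + t * E1 := by
        have key : ∀ a, q a * ((c + 1 - g a) * E0 + (g a - c) * E1)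
            = ((c + 1) * E0 - c * E1) * q a + (E1 - E0) * (q a * g a) := by intro a; ring
        rw [Finset.sum_congr rfl (fun a _ => key a), Finset.sum_add_distrib,
          ← Finset.mul_sum, ← Finset.mul_sum, hq1, ← hm]
        ring
    _ = E0 * (1 - t + t * Real.exp l) := by
        rw [hE1, show l * (c + 1) = l * c + l by ring, Real.exp_add, hE0]; ring
    _ ≤ E0 * Real.exp (t * l + l ^ 2 / 8) := by
        apply mul_le_mul_of_nonneg_left _ (Real.exp_pos _).le
        exact bul_key_ineq t (by linarith) (by linarith) l
    _ = Real.exp (l * m + l ^ 2 / 8) := by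
        rw [hE0, ← Real.exp_add]
        congr 1
        rw [ht]; ring

private lemma bul_mgf_pi {𝓧 : Type*} [Fintype 𝓧] :
    ∀ (n : ℕ) (p : Fin n → 𝓧 → ℝ), (∀ i a, 0 ≤ p i a) → (∀ i, ∑ a, p i a = 1) →
    ∀ (f : (Fin n → 𝓧) → ℝ),
    (∀ (x y : Fin n → 𝓧) (i : Fin n), (∀ j, j ≠ i → x j = y j) → f x - f y ≤ 1) →
    ∀ l : ℝ,
    ∑ x : Fin n → 𝓧, (∏ i, p i (x i)) * Real.exp (l * f x) ≤
      Real.exp (l * (∑ x : Fin n → 𝓧, (∏ i, p i (x i)) * f x) + n * l ^ 2 / 8) := by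
  intro n
  induction n with
  | zero =>
    intro p _ _ f _ l
    haveI : Unique (Fin 0 → 𝓧) := ⟨⟨Fin.elim0⟩, fun x => funext fun i => i.elim0⟩
    rw [Fintype.sum_unique, Fintype.sum_unique]
    simp
  | succ n ih =>
    intro p hp0 hp1 f hf l
    set p' : Fin n → 𝓧 → ℝ := fun i => p i.succ with hp'
    set w : (Fin n → 𝓧) → ℝ := fun x' => ∏ i, p' i (x' i) with hw
    have hwnn : ∀ x', 0 ≤ w x' := fun x' =>
      Finset.prod_nonneg fun i _ => hp0 i.succ (x' i)
    set h : (Fin n → 𝓧) → ℝ := fun x' => ∑ a, p 0 a * f (Fin.cons a x') with hh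
    -- sum decomposition
    have hsum : ∀ (F : (Fin (n+1) → 𝓧) → ℝ),
        ∑ x, F x = ∑ x' : Fin n → 𝓧, ∑ a, F (Fin.cons a x') := by
      intro F
      rw [← (Fin.consEquiv (fun _ : Fin (n+1) => 𝓧)).sum_comp F, Fintype.sum_prod_type,
        Finset.sum_comm]
      rfl
    have hprod : ∀ (a : 𝓧) (x' : Fin n → 𝓧),
        (∏ i, p i ((Fin.cons a x' : Fin (n+1) → 𝓧) i)) = p 0 a * w x' := by
      intro a x'
      rw [Fin.prod_univ_succ]
      simp [hw, hp']
    -- step 1: rewrite LHS and apply hoeffding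
    have step1 : ∑ x : Fin (n+1) → 𝓧, (∏ i, p i (x i)) * Real.exp (l * f x)
        ≤ ∑ x' : Fin n → 𝓧, w x' * Real.exp (l * h x' + l ^ 2 / 8) := by
      rw [hsum]
      apply Finset.sum_le_sum
      intro x' _
      have : ∑ a, (∏ i, p i ((Fin.cons a x' : Fin (n+1) → 𝓧) i)) * Real.exp (l * f (Fin.cons a x'))
          = w x' * ∑ a, p 0 a * Real.exp (l * f (Fin.cons a x')) := by
        rw [Finset.mul_sum]
        apply Finset.sum_congr rfl
        intro a _
        rw [hprod]; ring
      rw [this]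
      apply mul_le_mul_of_nonneg_left _ (hwnn x')
      apply bul_hoeffding_sum (p 0) (hp0 0) (hp1 0)
      intro a b
      apply hf _ _ 0
      intro j hj
      obtain ⟨k, rfl⟩ := Fin.eq_succ_of_ne_zero hj
      simp
    -- bounded differences of h
    have hhbd : ∀ (x y : Fin n → 𝓧) (i : Fin n), (∀ j, j ≠ i → x j = y j) →
        h x - h y ≤ 1 := by
      intro x y i hxy
      have : h x - h y = ∑ a, p 0 a * (f (Fin.cons a x) - f (Fin.cons a y)) := by
        simp only [hh, ← Finset.sum_sub_distrib, mul_sub]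
      rw [this]
      calc ∑ a, p 0 a * (f (Fin.cons a x) - f (Fin.cons a y))
          ≤ ∑ a, p 0 a * 1 := by
            apply Finset.sum_le_sum
            intro a _
            apply mul_le_mul_of_nonneg_left _ (hp0 0 a)
            apply hf _ _ i.succ
            intro j hj
            induction j using Fin.cases with
            | zero => simp
            | succ k =>
              simp only [Fin.cons_succ]
              exact hxy k (fun hk => hj (by rw [hk]))
        _ = 1 := by rw [← Finset.sum_mul, hp1 0, one_mul]
    -- mean identity
    have hmean : ∑ x : Fin (n+1) → 𝓧, (∏ i, p i (x i)) * f x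
        = ∑ x' : Fin n → 𝓧, w x' * h x' := by
      rw [hsum]
      apply Finset.sum_congr rfl
      intro x' _
      rw [hh, Finset.mul_sum]
      apply Finset.sum_congr rfl
      intro a _
      rw [hprod]; ring
    calc ∑ x : Fin (n+1) → 𝓧, (∏ i, p i (x i)) * Real.exp (l * f x)
        ≤ ∑ x' : Fin n → 𝓧, w x' * Real.exp (l * h x' + l ^ 2 / 8) := step1
      _ = Real.exp (l ^ 2 / 8) * ∑ x' : Fin n → 𝓧, w x' * Real.exp (l * h x') := by
          rw [Finset.mul_sum]
          apply Finset.sum_congr rfl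
          intro x' _
          rw [Real.exp_add]; ring
      _ ≤ Real.exp (l ^ 2 / 8) *
            Real.exp (l * (∑ x' : Fin n → 𝓧, w x' * h x') + n * l ^ 2 / 8) := by
          apply mul_le_mul_of_nonneg_left _ (Real.exp_pos _).le
          exact ih p' (fun i a => hp0 i.succ a) (fun i => hp1 i.succ) h hhbd l
      _ = Real.exp (l * (∑ x : Fin (n+1) → 𝓧, (∏ i, p i (x i)) * f x) + (n+1) * l ^ 2 / 8) := by
          rw [← Real.exp_add, hmean]
          congr 1
          ring
      _ = _ := by norm_num

private lemma bul_chernoff {𝓧 : Type*} [Fintype 𝓧] {n : ℕ} (hn : 0 < n) (p : Fin n → 𝓧 → ℝ)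
    (hp0 : ∀ i a, 0 ≤ p i a) (hp1 : ∀ i, ∑ a, p i a = 1) (f : (Fin n → 𝓧) → ℝ)
    (hf : ∀ (x y : Fin n → 𝓧) (i : Fin n), (∀ j, j ≠ i → x j = y j) → f x - f y ≤ 1)
    (S : Finset (Fin n → 𝓧)) (r : ℝ)
    (hfr : ∀ x ∈ S, r ≤ f x)
    (hmr : (∑ x, (∏ i, p i (x i)) * f x) ≤ r) :
    ∑ x ∈ S, ∏ i, p i (x i) ≤
      Real.exp (-2 * (r - ∑ x, (∏ i, p i (x i)) * f x) ^ 2 / n) := by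
  set w : (Fin n → 𝓧) → ℝ := fun x => ∏ i, p i (x i) with hw
  have hwnn : ∀ x, 0 ≤ w x := fun x => Finset.prod_nonneg fun i _ => hp0 i (x i)
  set m := ∑ x, w x * f x with hm
  have hnne : (n : ℝ) ≠ 0 := Nat.cast_ne_zero.mpr hn.ne'
  have hnpos : (0:ℝ) < n := Nat.cast_pos.mpr hn
  set l := 4 * (r - m) / n with hl
  have hl0 : 0 ≤ l := by
    apply div_nonneg _ hnpos.le
    linarith
  calc ∑ x ∈ S, w x
      ≤ ∑ x ∈ S, w x * Real.exp (l * (f x - r)) := by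
        apply Finset.sum_le_sum
        intro x hx
        apply le_mul_of_one_le_right (hwnn x)
        exact Real.one_le_exp (mul_nonneg hl0 (sub_nonneg.mpr (hfr x hx)))
    _ ≤ ∑ x, w x * Real.exp (l * (f x - r)) := by
        apply Finset.sum_le_sum_of_subset_of_nonneg (Finset.subset_univ S)
        exact fun x _ _ => mul_nonneg (hwnn x) (Real.exp_pos _).le
    _ = Real.exp (-(l * r)) * ∑ x, w x * Real.exp (l * f x) := by
        rw [Finset.mul_sum]
        apply Finset.sum_congr rfl
        intro x _
        rw [show l * (f x - r) = -(l * r) + l * f x by ring, Real.exp_add]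
        ring
    _ ≤ Real.exp (-(l * r)) * Real.exp (l * m + n * l ^ 2 / 8) := by
        apply mul_le_mul_of_nonneg_left _ (Real.exp_pos _).le
        exact bul_mgf_pi n p hp0 hp1 f hf l
    _ = Real.exp (-(l * r) + (l * m + n * l ^ 2 / 8)) := (Real.exp_add _ _).symm
    _ = Real.exp (-2 * (r - m) ^ 2 / n) := by
        congr 1
        rw [hl]
        field_simp
        ring

private lemma bul_meas_eq_sum {α : Type*} [MeasurableSpace α] [MeasurableSingletonClass α]
    (μ : Measure α) (s : Finset α) : μ ↑s = ∑ x ∈ s, μ {x} := by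
  rw [← measure_biUnion_finset]
  · congr 1; ext x; simp
  · intro x _ y _ hxy
    simp [Function.onFun, Set.disjoint_singleton, hxy]
  · intro x _; exact measurableSet_singleton x


/-- **Nonasymptotic blowing-up lemma.** Let `X₁,...,Xₙ` be independent random variables with
values in a finite set `𝓧`, with joint product law `Measure.pi P` on `𝓧ⁿ`. For any
`A ⊆ 𝓧ⁿ` of positive probability and any `r > √((n/2) ln(1/P(A)))`, the `r`-blowup of `A`
in the Hamming metric satisfies
`P(A_r) ≥ 1 - exp(-(2/n)(r - √((n/2) ln(1/P(A))))²)`. -/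
theorem blowing_up_lemma {𝓧 : Type*} [Fintype 𝓧] [DecidableEq 𝓧] [MeasurableSpace 𝓧]
    [MeasurableSingletonClass 𝓧] {n : ℕ}
    (P : Fin n → Measure 𝓧) [∀ i, IsProbabilityMeasure (P i)]
    (A : Set (Fin n → 𝓧)) (hA : 0 < Measure.pi P A)
    {r : ℝ} (hr : Real.sqrt ((n/2) * Real.log (1 / (Measure.pi P A).toReal)) < r) :
    1 - ENNReal.ofReal (Real.exp (-(2/(n:ℝ)) *
        (r - Real.sqrt ((n/2) * Real.log (1 / (Measure.pi P A).toReal)))^2)) ≤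
      Measure.pi P {x | ∃ y ∈ A, (hammingDist x y : ℝ) < r} := by
  classical
  rcases Nat.eq_zero_or_pos n with hn0 | hn
  · subst hn0
    norm_num
  haveI msc : MeasurableSingletonClass (Fin n → 𝓧) := ⟨fun x => by
    rw [← Set.univ_pi_singleton]
    exact MeasurableSet.univ_pi fun i => measurableSet_singleton _⟩
  haveI : IsProbabilityMeasure (Measure.pi P) := by infer_instance
  have hnne : (n : ℝ) ≠ 0 := Nat.cast_ne_zero.mpr hn.ne'
  have hnpos : (0:ℝ) < n := Nat.cast_pos.mpr hn
  set μ := Measure.pi P with hμ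
  set p : Fin n → 𝓧 → ℝ := fun i a => (P i {a}).toReal with hp
  set w : (Fin n → 𝓧) → ℝ := fun x => ∏ i, p i (x i) with hww
  have hp0 : ∀ i a, 0 ≤ p i a := fun i a => ENNReal.toReal_nonneg
  have hwnn : ∀ x, 0 ≤ w x := fun x => Finset.prod_nonneg fun i _ => hp0 i (x i)
  have hp1 : ∀ i, ∑ a, p i a = 1 := by
    intro i
    have h1 := bul_meas_eq_sum (P i) Finset.univ
    rw [Finset.coe_univ, measure_univ] at h1
    have h2 := congrArg ENNReal.toReal h1
    rw [ENNReal.toReal_sum (fun a _ => measure_ne_top _ _)] at h2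
    simpa [hp] using h2.symm
  have hmeasS : ∀ S : Set (Fin n → 𝓧), (μ S).toReal = ∑ x ∈ S.toFinset, w x := by
    intro S
    have hS : μ S = μ ↑S.toFinset := by rw [Set.coe_toFinset]
    rw [hS, bul_meas_eq_sum μ S.toFinset,
      ENNReal.toReal_sum (fun x _ => measure_ne_top _ _)]
    apply Finset.sum_congr rfl
    intro x _
    rw [hμ, ← Set.univ_pi_singleton, Measure.pi_pi, ENNReal.toReal_prod]
  have hAne : A.Nonempty := by
    rcases Set.eq_empty_or_nonempty A with h | h
    · rw [h] at hA; simp at hA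
    · exact h
  have hAfin : A.toFinset.Nonempty := by rwa [Set.toFinset_nonempty]
  set f : (Fin n → 𝓧) → ℝ :=
    fun x => ((A.toFinset.inf' hAfin fun y => hammingDist x y : ℕ) : ℝ) with hff
  have hf0 : ∀ x ∈ A, f x = 0 := by
    intro x hx
    have h1 : A.toFinset.inf' hAfin (fun y => hammingDist x y) ≤ hammingDist x x :=
      Finset.inf'_le _ (Set.mem_toFinset.mpr hx)
    rw [hammingDist_self, Nat.le_zero] at h1
    simp only [hff]
    exact_mod_cast h1
  have hfnn : ∀ x, 0 ≤ f x := fun x => Nat.cast_nonneg _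
  have hfbd : ∀ (x y : Fin n → 𝓧) (i : Fin n), (∀ j, j ≠ i → x j = y j) → f x - f y ≤ 1 := by
    intro x y i hxy
    have hd1 : hammingDist x y ≤ 1 := by
      have hsub : (Finset.univ.filter fun j => x j ≠ y j) ⊆ {i} := by
        intro j hj
        rw [Finset.mem_filter] at hj
        rw [Finset.mem_singleton]
        by_contra hji
        exact hj.2 (hxy j hji)
      calc hammingDist x y = (Finset.univ.filter fun j => x j ≠ y j).card := rfl
        _ ≤ ({i} : Finset (Fin n)).card := Finset.card_le_card hsub
        _ = 1 := Finset.card_singleton i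
    obtain ⟨z, hz, hzeq⟩ := Finset.exists_mem_eq_inf' hAfin (fun y' => hammingDist y y')
    have h1 : A.toFinset.inf' hAfin (fun y' => hammingDist x y') ≤ hammingDist x z :=
      Finset.inf'_le _ hz
    have h2 := hammingDist_triangle x y z
    have h3 : A.toFinset.inf' hAfin (fun y' => hammingDist x y') ≤
        1 + A.toFinset.inf' hAfin (fun y' => hammingDist y y') := by
      rw [hzeq]; omega
    have h4 : ((A.toFinset.inf' hAfin fun y' => hammingDist x y' : ℕ) : ℝ) ≤
        1 + ((A.toFinset.inf' hAfin fun y' => hammingDist y y' : ℕ) : ℝ) := by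
      exact_mod_cast h3
    simp only [hff]
    linarith
  set m := ∑ x, w x * f x with hm
  have hm0 : 0 ≤ m :=
    Finset.sum_nonneg fun x _ => mul_nonneg (hwnn x) (hfnn x)
  set PA := (μ A).toReal with hPA
  have hPA0 : 0 < PA := ENNReal.toReal_pos hA.ne' (measure_ne_top _ _)
  -- (a) P(A) ≤ exp(-2 m² / n)
  have hPAbound : PA ≤ Real.exp (-2 * m ^ 2 / n) := by
    have happ := bul_chernoff hn p hp0 hp1 (fun x => -f x)
      (fun x y i hxy => by
        have := hfbd y x i (fun j hj => (hxy j hj).symm)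
        show -f x - -f y ≤ 1
        linarith)
      A.toFinset 0
      (fun x hx => by
        show (0:ℝ) ≤ -f x
        rw [hf0 x (Set.mem_toFinset.mp hx)]; norm_num)
      (by
        have heq : ∑ x, (∏ i, p i (x i)) * -f x = -m := by
          rw [hm, ← Finset.sum_neg_distrib]
          exact Finset.sum_congr rfl fun x _ => by ring
        rw [heq]; linarith)
    have hsimp : ∑ x, (∏ i, p i (x i)) * -f x = -m := by
      rw [hm, ← Finset.sum_neg_distrib]
      exact Finset.sum_congr rfl fun x _ => by ring
    rw [hsimp] at happ
    rw [hPA, hmeasS A]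
    convert happ using 3
    ring
  set s := Real.sqrt ((n/2) * Real.log (1 / PA)) with hs
  have hms : m ≤ s := by
    have hlog : Real.log PA ≤ -2 * m ^ 2 / n := by
      have := Real.log_le_log hPA0 hPAbound
      rwa [Real.log_exp] at this
    have hm2 : m ^ 2 ≤ (n/2) * Real.log (1 / PA) := by
      rw [one_div, Real.log_inv]
      have h4 := mul_le_mul_of_nonneg_left hlog (by linarith : (0:ℝ) ≤ n / 2)
      rw [mul_div_assoc] at h4
      have h5 : (n:ℝ)/2 * (-2 * m ^ 2 / n) = -m^2 := by field_simp
      nlinarith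
    calc m = Real.sqrt (m ^ 2) := by rw [Real.sqrt_sq hm0]
      _ ≤ s := Real.sqrt_le_sqrt hm2
  have hmr : m ≤ r := le_trans hms hr.le
  -- (b) tail bound
  have htail : (μ {x | r ≤ f x}).toReal ≤ Real.exp (-2 * (r - m) ^ 2 / n) := by
    rw [hmeasS]
    exact bul_chernoff hn p hp0 hp1 f hfbd _ r
      (fun x hx => by simpa using Set.mem_toFinset.mp hx) hmr
  have htail2 : Real.exp (-2 * (r - m) ^ 2 / n) ≤
      Real.exp (-(2/(n:ℝ)) * (r - s) ^ 2) := by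
    apply Real.exp_le_exp.mpr
    have h1 : (r - s) ^ 2 ≤ (r - m) ^ 2 := by
      apply pow_le_pow_left₀ (by linarith) (by linarith) 2
    have h2 : (0:ℝ) ≤ 2 / n := by positivity
    have h3 := mul_le_mul_of_nonneg_left h1 h2
    have h4 : -2 * (r - m) ^ 2 / n = -(2/(n:ℝ) * (r - m)^2) := by ring
    linarith [h3, h4 ▸ le_refl (-2 * (r - m) ^ 2 / (n:ℝ))]
  -- set identity
  have hBset : {x | ∃ y ∈ A, (hammingDist x y : ℝ) < r} = {x : Fin n → 𝓧 | f x < r} := by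
    ext x
    simp only [Set.mem_setOf_eq]
    constructor
    · rintro ⟨y, hy, hlt⟩
      refine lt_of_le_of_lt ?_ hlt
      simp only [hff]
      exact_mod_cast Finset.inf'_le _ (Set.mem_toFinset.mpr hy)
    · intro hlt
      obtain ⟨y, hy, hyeq⟩ := Finset.exists_mem_eq_inf' hAfin (fun y => hammingDist x y)
      refine ⟨y, Set.mem_toFinset.mp hy, ?_⟩
      simp only [hff, hyeq] at hlt
      exact_mod_cast hlt
  rw [hBset]
  set B := {x : Fin n → 𝓧 | f x < r} with hB
  have hBm : MeasurableSet B := (Set.toFinite B).measurableSet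
  have hcompl : μ B = 1 - μ Bᶜ := by
    have := prob_compl_eq_one_sub (μ := μ) hBm.compl
    rwa [compl_compl] at this
  rw [hcompl]
  apply tsub_le_tsub_left _ 1
  have hBc : Bᶜ = {x : Fin n → 𝓧 | r ≤ f x} := by
    ext x; simp [hB, not_lt]
  calc μ Bᶜ = ENNReal.ofReal ((μ Bᶜ).toReal) :=
        (ENNReal.ofReal_toReal (measure_ne_top _ _)).symm
    _ ≤ ENNReal.ofReal (Real.exp (-(2/(n:ℝ)) * (r - s) ^ 2)) := by
        apply ENNReal.ofReal_le_ofReal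
        rw [hBc]
        exact le_trans htail htail2
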